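/- Let f(t) ∈ F_{q^n}[t] have degree less than q^n. Then f(t) is (n,q)-quasi-symmetric (i.e., f(t) = F(t, t^q, ..., t^{q^{n-1}}) for some quasi-symmetric polynomial F in n variables over F_{q^n}) if and only if f(γ^q) = f(γ) for every γ ∈ F_{q^n}. -/

import Mathlib

namespace QSAux

/-- digit `j` of `k` in base `q` -/
def D (q j k : ℕ) : ℕ := k / q ^ j % q

/-- rotation of base-`q` digits on `[0, q^(m+1))` -/
def sig (q m k : ℕ) : ℕ := k % q ^ m * q + k / q ^ m

def tau (q m k : ℕ) : ℕ := q ^ m * (k % q) + k / q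

lemma mod_mul_aux (a b c : ℕ) (hb : 0 < b) (hc : 0 < c) :
    a % (b * c) = a % b + b * (a / b % c) := by
  conv_lhs => rw [← Nat.div_add_mod a b, ← Nat.div_add_mod (a / b) c]
  have h1 : b * (c * (a / b / c) + a / b % c) + a % b
      = (a % b + b * (a / b % c)) + (a / b / c) * (b * c) := by ring
  rw [h1, Nat.add_mul_mod_self_right, Nat.mod_eq_of_lt]
  have h2 : a % b < b := Nat.mod_lt _ hb
  have h3 : a / b % c < c := Nat.mod_lt _ hc
  have h4 : b * (a / b % c + 1) ≤ b * c := Nat.mul_le_mul_left _ h3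
  have h5 : b * (a / b % c + 1) = b * (a / b % c) + b := by ring
  omega

variable {q m k : ℕ}

lemma digit_sum (hq : 0 < q) (n k : ℕ) :
    ∑ i ∈ Finset.range n, D q i k * q ^ i = k % q ^ n := by
  induction n with
  | zero => simp [Nat.mod_one]
  | succ n ih =>
      rw [Finset.sum_range_succ, ih, pow_succ,
        mod_mul_aux k (q ^ n) q (pow_pos hq n) hq, D, mul_comm]

lemma div_pow_lt (hk : k < q ^ (m + 1)) (hq : 0 < q) : k / q ^ m < q := by
  rw [Nat.div_lt_iff_lt_mul (pow_pos hq m)]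
  rwa [pow_succ, mul_comm] at hk

lemma sig_lt (hq : 0 < q) (hk : k < q ^ (m + 1)) : sig q m k < q ^ (m + 1) := by
  have h1 : k % q ^ m < q ^ m := Nat.mod_lt _ (pow_pos hq m)
  have h2 : k / q ^ m < q := div_pow_lt hk hq
  have h3 : (k % q ^ m + 1) * q ≤ q ^ m * q := Nat.mul_le_mul_right _ h1
  have h4 : (k % q ^ m + 1) * q = k % q ^ m * q + q := by ring
  have h5 : q ^ (m + 1) = q ^ m * q := pow_succ q m
  unfold sig
  omega

lemma tau_lt (hq : 0 < q) (hk : k < q ^ (m + 1)) : tau q m k < q ^ (m + 1) := by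
  have h1 : k % q < q := Nat.mod_lt _ hq
  have h2 : k / q < q ^ m := by
    rw [Nat.div_lt_iff_lt_mul hq]; rwa [pow_succ] at hk
  have h3 : q ^ m * (k % q + 1) ≤ q ^ m * q := Nat.mul_le_mul_left _ h1
  have h4 : q ^ m * (k % q + 1) = q ^ m * (k % q) + q ^ m := by ring
  have h5 : q ^ (m + 1) = q ^ m * q := pow_succ q m
  unfold tau
  omega

lemma sig_mod (hq : 0 < q) (hk : k < q ^ (m + 1)) : sig q m k % q = k / q ^ m := by
  rw [sig, Nat.mul_add_mod', Nat.mod_eq_of_lt (div_pow_lt hk hq)]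

lemma sig_div (hq : 0 < q) (hk : k < q ^ (m + 1)) : sig q m k / q = k % q ^ m := by
  rw [sig, mul_comm, Nat.mul_add_div hq, Nat.div_eq_of_lt (div_pow_lt hk hq), add_zero]

lemma tau_sig (hq : 0 < q) (hk : k < q ^ (m + 1)) : tau q m (sig q m k) = k := by
  rw [tau, sig_mod hq hk, sig_div hq hk, Nat.div_add_mod]

lemma sig_tau (hq : 0 < q) (hk : k < q ^ (m + 1)) : sig q m (tau q m k) = k := by
  have h2 : k / q < q ^ m := by
    rw [Nat.div_lt_iff_lt_mul hq]; rwa [pow_succ] at hk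
  have hmod : tau q m k % q ^ m = k / q := by
    rw [tau, Nat.mul_add_mod, Nat.mod_eq_of_lt h2]
  have hdiv : tau q m k / q ^ m = k % q := by
    rw [tau, Nat.mul_add_div (pow_pos hq m), Nat.div_eq_of_lt h2, add_zero]
  rw [sig, hmod, hdiv, Nat.div_add_mod']

lemma D_sig_zero (hq : 0 < q) (hk : k < q ^ (m + 1)) : D q 0 (sig q m k) = D q m k := by
  rw [D, D, pow_zero, Nat.div_one, sig_mod hq hk, Nat.mod_eq_of_lt (div_pow_lt hk hq)]

lemma D_sig_succ (hq : 0 < q) (hk : k < q ^ (m + 1)) {j : ℕ} (hj : j < m) :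
    D q (j + 1) (sig q m k) = D q j k := by
  have h1 : sig q m k / q ^ (j + 1) = k % q ^ m / q ^ j := by
    rw [pow_succ', ← Nat.div_div_eq_div_mul, sig_div hq hk]
  rw [D, h1]
  have h2 : q ^ m = q ^ j * q ^ (m - j) := by
    rw [← pow_add]; congr 1; omega
  rw [h2, Nat.mod_mul_right_div_self,
    Nat.mod_mod_of_dvd _ (dvd_pow_self q (by omega : m - j ≠ 0))]
  rfl

lemma qk_eq (hq : 0 < q) :
    q * k + k / q ^ m = sig q m k + q ^ (m + 1) * (k / q ^ m) := by
  obtain ⟨X, R, hR, rfl⟩ : ∃ X R, R < q ^ m ∧ q ^ m * X + R = k :=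
    ⟨k / q ^ m, k % q ^ m, Nat.mod_lt _ (pow_pos hq m), Nat.div_add_mod k _⟩
  have hdiv : (q ^ m * X + R) / q ^ m = X := by
    rw [Nat.mul_add_div (pow_pos hq m), Nat.div_eq_of_lt hR, add_zero]
  have hmod : (q ^ m * X + R) % q ^ m = R := by
    rw [Nat.mul_add_mod, Nat.mod_eq_of_lt hR]
  rw [sig, hdiv, hmod]
  ring

lemma sig_eq_zero_iff (hq : 0 < q) : sig q m k = 0 ↔ k = 0 := by
  have h1 : q ^ m * (k / q ^ m) + k % q ^ m = k := Nat.div_add_mod k (q ^ m)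
  constructor
  · intro h
    rw [sig] at h
    have h2 : k % q ^ m * q = 0 ∧ k / q ^ m = 0 := Nat.add_eq_zero.mp h
    have h3 : k % q ^ m = 0 := by
      rcases Nat.mul_eq_zero.mp h2.1 with h | h
      · exact h
      · omega
    rw [h2.2, h3, Nat.mul_zero, Nat.add_zero] at h1
    omega
  · rintro rfl; simp [sig]

end QSAux


theorem quasiSymmetric_iff_frobenius_invariant (q n : ℕ) (hq : IsPrimePow q) (hn : 1 ≤ n)
    (K : Type*) [Field K] [Fintype K] (hK : Fintype.card K = q ^ n)
    (f : Polynomial K) (hdeg : f.natDegree < q ^ n) :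
    (∃ F : MvPolynomial (Fin n) K, MvPolynomial.rename (finRotate n) F = F ∧
        (MvPolynomial.aeval fun i : Fin n => (Polynomial.X : Polynomial K) ^ q ^ (i : ℕ)) F = f)
      ↔ ∀ γ : K, f.eval (γ ^ q) = f.eval γ := by
  obtain ⟨m, rfl⟩ : ∃ m, n = m + 1 := ⟨n - 1, (Nat.succ_pred_eq_of_pos hn).symm⟩
  have hq2 : 2 ≤ q := hq.two_le
  have hq0 : 0 < q := by omega
  constructor
  · rintro ⟨F, hrot, rfl⟩ γ
    have hev : ∀ δ : K,
        Polynomial.eval δ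
          ((MvPolynomial.aeval fun i : Fin (m+1) => (Polynomial.X : Polynomial K) ^ q ^ (i : ℕ)) F)
          = (MvPolynomial.aeval fun i : Fin (m+1) => δ ^ q ^ (i : ℕ)) F := by
      intro δ
      have := MvPolynomial.comp_aeval_apply (R := K) (Polynomial.aeval δ)
        (f := fun i : Fin (m+1) => (Polynomial.X : Polynomial K) ^ q ^ (i : ℕ)) (p := F)
      simpa using this
    rw [hev, hev]
    conv_rhs => rw [← hrot, MvPolynomial.aeval_rename]
    have harg : (fun i : Fin (m+1) => (γ ^ q) ^ q ^ (i : ℕ))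
        = (fun i : Fin (m+1) => γ ^ q ^ (i : ℕ)) ∘ (finRotate (m+1)) := by
      funext i
      simp only [Function.comp_apply, finRotate_succ_apply]
      rcases eq_or_ne i (Fin.last m) with rfl | hi
      · have h0 : ((Fin.last m + 1 : Fin (m+1)) : ℕ) = 0 := by
          simp [Fin.val_add_one]
        rw [h0]
        simp only [Fin.val_last, pow_zero, pow_one]
        calc (γ ^ q) ^ q ^ m = γ ^ (q ^ m * q) := by rw [mul_comm, pow_mul]
          _ = γ ^ q ^ (m+1) := by rw [pow_succ]
          _ = γ := by rw [← hK, FiniteField.pow_card]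
      · have h0 : ((i + 1 : Fin (m+1)) : ℕ) = (i : ℕ) + 1 := by
          rw [Fin.val_add_one]; simp [hi]
        rw [h0, pow_succ, mul_comm (q ^ (i:ℕ)) q, pow_mul]
    rw [harg]
  · intro hγ
    have hQ1 : 1 ≤ q ^ (m + 1) := Nat.one_le_pow _ _ hq0
    have hfrep : f = ∑ k ∈ Finset.range (q ^ (m + 1)), Polynomial.monomial k (f.coeff k) :=
      Polynomial.as_sum_range' f _ hdeg
    set g : Polynomial K :=
      ∑ k ∈ Finset.range (q ^ (m + 1)), Polynomial.monomial (QSAux.sig q m k) (f.coeff k)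
      with hgdef
    have hgeval : ∀ γ : K, g.eval γ = f.eval (γ ^ q) := by
      intro γ
      rw [hgdef]
      conv_rhs => rw [hfrep]
      rw [Polynomial.eval_finset_sum, Polynomial.eval_finset_sum]
      refine Finset.sum_congr rfl fun k hk => ?_
      have hk' := Finset.mem_range.mp hk
      rw [Polynomial.eval_monomial, Polynomial.eval_monomial]
      congr 1
      have hpow : (γ ^ q) ^ k = γ ^ (q * k) := (pow_mul γ q k).symm
      rw [hpow]
      rcases eq_or_ne γ 0 with rfl | hγ0
      · rcases eq_or_ne k 0 with rfl | hk0
        · simp [QSAux.sig]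
        · rw [zero_pow (fun h => hk0 ((QSAux.sig_eq_zero_iff hq0).mp h)),
            zero_pow (Nat.mul_ne_zero (by omega) hk0)]
      · have h1 : γ ^ q ^ (m + 1) = γ := by rw [← hK]; exact FiniteField.pow_card γ
        have hkey := QSAux.qk_eq (m := m) (k := k) hq0
        have h2 : γ ^ (QSAux.sig q m k) * γ ^ (k / q ^ m)
            = γ ^ (q * k) * γ ^ (k / q ^ m) := by
          conv_rhs => rw [← pow_add, hkey, pow_add, pow_mul, h1]
        exact mul_right_cancel₀ (pow_ne_zero _ hγ0) h2
    have hgf : g = f := by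
      have hdeg' : (g - f).natDegree < Fintype.card K := by
        rw [hK]
        apply lt_of_le_of_lt (Polynomial.natDegree_sub_le g f)
        rw [max_lt_iff]
        refine ⟨lt_of_le_of_lt (Polynomial.natDegree_sum_le_of_forall_le _ _
          fun k hk => ?_) (by omega : q ^ (m + 1) - 1 < q ^ (m + 1)), hdeg⟩
        refine le_trans (Polynomial.natDegree_monomial_le _) ?_
        have := QSAux.sig_lt hq0 (Finset.mem_range.mp hk)
        omega
      have h0 : g - f = 0 :=
        Polynomial.eq_zero_of_natDegree_lt_card_of_eval_eq_zero (g - f)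
          Function.injective_id
          (fun γ => by rw [Polynomial.eval_sub, hgeval, hγ, sub_self]) hdeg'
      exact sub_eq_zero.mp h0
    have hcoeff : ∀ k ∈ Finset.range (q ^ (m + 1)),
        f.coeff (QSAux.sig q m k) = f.coeff k := by
      intro k hk
      have hk' := Finset.mem_range.mp hk
      have hco : g.coeff (QSAux.sig q m k) = f.coeff k := by
        have hzero : ∀ b ∈ Finset.range (q ^ (m + 1)), b ≠ k →
            (Polynomial.monomial (QSAux.sig q m b) (f.coeff b)).coeff (QSAux.sig q m k) = 0 := by
          intro b hb hbk
          rw [Polynomial.coeff_monomial, if_neg]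
          intro hcontra
          exact hbk (by
            rw [← QSAux.tau_sig hq0 (Finset.mem_range.mp hb), hcontra,
              QSAux.tau_sig hq0 hk'])
        rw [hgdef, Polynomial.finset_sum_coeff, Finset.sum_eq_single_of_mem k hk hzero,
          Polynomial.coeff_monomial, if_pos rfl]
      rw [hgf] at hco
      exact hco
    set e : ℕ → (Fin (m + 1) →₀ ℕ) :=
      fun k => Finsupp.equivFunOnFinite.symm fun i : Fin (m + 1) => QSAux.D q (i : ℕ) k
      with he
    refine ⟨∑ k ∈ Finset.range (q ^ (m + 1)),
      MvPolynomial.monomial (e k) (f.coeff k), ?_, ?_⟩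
    · rw [map_sum]
      have hmap : ∀ k ∈ Finset.range (q ^ (m + 1)),
          Finsupp.mapDomain (finRotate (m + 1)) (e k) = e (QSAux.sig q m k) := by
        intro k hk
        have hk' := Finset.mem_range.mp hk
        ext j
        obtain ⟨i, rfl⟩ := (finRotate (m + 1)).surjective j
        rw [Finsupp.mapDomain_apply (finRotate (m + 1)).injective]
        simp only [he, Finsupp.coe_equivFunOnFinite_symm]
        rcases eq_or_ne i (Fin.last m) with rfl | hi
        · have h0 : ((finRotate (m + 1)) (Fin.last m) : ℕ) = 0 := by
            simp [finRotate_succ_apply, Fin.val_add_one]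
          rw [h0, QSAux.D_sig_zero hq0 hk', Fin.val_last]
        · have h0 : ((finRotate (m + 1)) i : ℕ) = (i : ℕ) + 1 := by
            rw [finRotate_succ_apply, Fin.val_add_one]; simp [hi]
          have hilt : (i : ℕ) < m := by
            have := i.isLt
            rcases Nat.lt_succ_iff_lt_or_eq.mp this with h | h
            · exact h
            · exact absurd (Fin.ext h : i = Fin.last m) hi
          rw [h0, QSAux.D_sig_succ hq0 hk' hilt]
      calc ∑ k ∈ Finset.range (q ^ (m + 1)),
            (MvPolynomial.rename (finRotate (m + 1))) (MvPolynomial.monomial (e k) (f.coeff k))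
          = ∑ k ∈ Finset.range (q ^ (m + 1)),
            MvPolynomial.monomial (e (QSAux.sig q m k)) (f.coeff (QSAux.sig q m k)) :=
            Finset.sum_congr rfl fun k hk => by
              rw [MvPolynomial.rename_monomial, hmap k hk, hcoeff k hk]
        _ = ∑ k ∈ Finset.range (q ^ (m + 1)),
            MvPolynomial.monomial (e k) (f.coeff k) := by
            refine Finset.sum_nbij' (QSAux.sig q m) (QSAux.tau q m)
              (fun a ha => Finset.mem_range.mpr
                (QSAux.sig_lt hq0 (Finset.mem_range.mp ha)))
              (fun a ha => Finset.mem_range.mpr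
                (QSAux.tau_lt hq0 (Finset.mem_range.mp ha)))
              (fun a ha => QSAux.tau_sig hq0 (Finset.mem_range.mp ha))
              (fun a ha => QSAux.sig_tau hq0 (Finset.mem_range.mp ha))
              (fun a ha => rfl)
    · rw [map_sum]
      have hterm : ∀ k ∈ Finset.range (q ^ (m + 1)),
          (MvPolynomial.aeval fun i : Fin (m + 1) => (Polynomial.X : Polynomial K) ^ q ^ (i : ℕ))
            (MvPolynomial.monomial (e k) (f.coeff k)) = Polynomial.monomial k (f.coeff k) := by
        intro k hk
        have hk' := Finset.mem_range.mp hk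
        rw [MvPolynomial.aeval_monomial,
          Finsupp.prod_fintype _ _ (fun i => pow_zero _)]
        simp only [he, Finsupp.coe_equivFunOnFinite_symm]
        have hstep : ∀ i : Fin (m + 1),
            ((Polynomial.X : Polynomial K) ^ q ^ (i : ℕ)) ^ QSAux.D q (i : ℕ) k
            = (Polynomial.X : Polynomial K) ^ (QSAux.D q (i : ℕ) k * q ^ (i : ℕ)) := by
          intro i; rw [← pow_mul, mul_comm]
        rw [Finset.prod_congr rfl fun i _ => hstep i, Finset.prod_pow_eq_pow_sum,
          Fin.sum_univ_eq_sum_range (fun j => QSAux.D q j k * q ^ j),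
          QSAux.digit_sum hq0, Nat.mod_eq_of_lt hk', Polynomial.algebraMap_eq,
          Polynomial.C_mul_X_pow_eq_monomial]
      rw [Finset.sum_congr rfl hterm, ← hfrep]
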